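/- arXiv:1105.6152 — 2 statements merged into one kernel-verified Lean document; each statement's English description precedes it below -/
import Mathlib

section
/- Let n ≥ 2 and 0 < q < ∞, and let μ be the measure on ℝ^n given by dμ = |x|^{−1} χ_{B(0,1)}(x) dx. Then there exist constants c₁, c₂ > 0, depending only on n and q, such that for all x with 0 < |x| ≤ 1/2: c₁ (log(1/|x|))^{1/q} ≤ T^q_1(μ)(x) ≤ c₂ (log(1/|x|))^{1/q}. -/
open MeasureTheory Metric Set ENNReal
open scoped Interval

noncomputable section

/-- The nonlinear potential `T^q_α(μ)(x) = (∫_0^∞ (μ(B(x,r))/r^{n−α})^q dr/r)^{1/q}`. -/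
def Tpot (n : ℕ) (α q : ℝ) (μ : Measure (EuclideanSpace ℝ (Fin n)))
    (x : EuclideanSpace ℝ (Fin n)) : ℝ≥0∞ :=
  (∫⁻ r in Set.Ioi (0 : ℝ),
      (μ (Metric.ball x r) / ENNReal.ofReal (r ^ ((n : ℝ) - α))) ^ q
        * ENNReal.ofReal (1 / r)) ^ (1 / q)

/-- The fractional maximal function `M_α(μ)(x) = sup_{r>0} μ(B(x,r))/r^{n−α}`. -/
def Mfrac (n : ℕ) (α : ℝ) (μ : Measure (EuclideanSpace ℝ (Fin n)))
    (x : EuclideanSpace ℝ (Fin n)) : ℝ≥0∞ :=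
  ⨆ (r : ℝ) (_ : 0 < r), μ (Metric.ball x r) / ENNReal.ofReal (r ^ ((n : ℝ) - α))

/-- The closed axis-parallel cube with center `c` and side length `s`. -/
def axisCube (n : ℕ) (c : EuclideanSpace ℝ (Fin n)) (s : ℝ) :
    Set (EuclideanSpace ℝ (Fin n)) :=
  {x | ∀ i, |x i - c i| ≤ s / 2}

/-- The weighted measure `|S|_σ = ∫_S σ dx`. -/
def wMeasure (n : ℕ) (σ : EuclideanSpace ℝ (Fin n) → ℝ)
    (S : Set (EuclideanSpace ℝ (Fin n))) : ℝ≥0∞ :=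
  ∫⁻ x in S, ENNReal.ofReal (σ x)

/-- `σ` is a weak `A∞` weight with constants `Cσ, θ`: it is nonnegative, locally
integrable, and `|E|_σ ≤ Cσ (|E|/|Q|)^θ |2Q|_σ` for all cubes `Q` and measurable `E ⊆ Q`. -/
def IsWeakAInfty (n : ℕ) (σ : EuclideanSpace ℝ (Fin n) → ℝ) (Cσ θ : ℝ) : Prop :=
  0 < Cσ ∧ 0 < θ ∧ (∀ x, 0 ≤ σ x) ∧ LocallyIntegrable σ ∧
    ∀ (c : EuclideanSpace ℝ (Fin n)) (s : ℝ), 0 < s →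
      ∀ E ⊆ axisCube n c s, MeasurableSet E →
        wMeasure n σ E ≤
          ENNReal.ofReal (Cσ * ((volume E).toReal / (volume (axisCube n c s)).toReal) ^ θ)
            * wMeasure n σ (axisCube n c (2 * s))

/-- The dyadic cube `2^k(m + [0,1)^n)`. -/
def dyadicCube (n : ℕ) (k : ℤ) (m : Fin n → ℤ) : Set (EuclideanSpace ℝ (Fin n)) :=
  {x | ∀ i, (2 : ℝ) ^ k * m i ≤ x i ∧ x i < (2 : ℝ) ^ k * (m i + 1)}

/-- The unique dyadic cube of side length `2^k` containing `x`. -/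
def dyadicCubeAt (n : ℕ) (k : ℤ) (x : EuclideanSpace ℝ (Fin n)) :
    Set (EuclideanSpace ℝ (Fin n)) :=
  dyadicCube n k (fun i => ⌊x i / (2 : ℝ) ^ k⌋)

/-- The dyadic nonlinear potential `𝒯(μ)(x) = (∑_{Q ∋ x} (μ(Q)/ℓ(Q)^{n−α})^q)^{1/q}`. -/
def Tdyadic (n : ℕ) (α q : ℝ) (μ : Measure (EuclideanSpace ℝ (Fin n)))
    (x : EuclideanSpace ℝ (Fin n)) : ℝ≥0∞ :=
  (∑' k : ℤ,
      (μ (dyadicCubeAt n k x) / ENNReal.ofReal (((2 : ℝ) ^ k) ^ ((n : ℝ) - α))) ^ q) ^ (1 / q)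

/-- The dyadic fractional maximal function `ℳ_α(μ)(x) = sup_{Q ∋ x} μ(Q)/ℓ(Q)^{n−α}`. -/
def Mdyadic (n : ℕ) (α : ℝ) (μ : Measure (EuclideanSpace ℝ (Fin n)))
    (x : EuclideanSpace ℝ (Fin n)) : ℝ≥0∞ :=
  ⨆ k : ℤ, μ (dyadicCubeAt n k x) / ENNReal.ofReal (((2 : ℝ) ^ k) ^ ((n : ℝ) - α))

/-- `F(μ)(x) = (∑_{j∈ℤ} (μ(B(x,2^j))/2^{j(n−α)})^q)^{1/q}`. -/
def Fpot (n : ℕ) (α q : ℝ) (μ : Measure (EuclideanSpace ℝ (Fin n)))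
    (x : EuclideanSpace ℝ (Fin n)) : ℝ≥0∞ :=
  (∑' j : ℤ,
      (μ (Metric.ball x ((2 : ℝ) ^ j)) / ENNReal.ofReal (((2 : ℝ) ^ j) ^ ((n : ℝ) - α))) ^ q) ^ (1 / q)

/-- The exponential function extended to `ℝ≥0∞`. -/
def expE (t : ℝ≥0∞) : ℝ≥0∞ :=
  if t = ⊤ then ⊤ else ENNReal.ofReal (Real.exp t.toReal)

/-- The centered Hardy–Littlewood maximal function of a measure. -/
def Mhl (n : ℕ) (ν : Measure (EuclideanSpace ℝ (Fin n)))
    (x : EuclideanSpace ℝ (Fin n)) : ℝ≥0∞ :=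
  ⨆ (r : ℝ) (_ : 0 < r), ν (Metric.ball x r) / volume (Metric.ball x r)

namespace SharpnessAux

variable {n : ℕ}

/-- The base integral constant. -/
def kap (n : ℕ) : ℝ≥0∞ :=
  ∫⁻ y in ball (0 : EuclideanSpace ℝ (Fin n)) 1, ENNReal.ofReal ‖y‖⁻¹

/-- The measure of the example. -/
def sharpMu (n : ℕ) : Measure (EuclideanSpace ℝ (Fin n)) :=
  volume.withDensity fun y =>
    Set.indicator (Metric.ball (0 : EuclideanSpace ℝ (Fin n)) 1)
      (fun z => ENNReal.ofReal ‖z‖⁻¹) y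

lemma nontrivialE (hn : 2 ≤ n) : Nontrivial (EuclideanSpace ℝ (Fin n)) := by
  have h : 0 < Module.finrank ℝ (EuclideanSpace ℝ (Fin n)) := by
    rw [finrank_euclideanSpace_fin]; omega
  exact Module.nontrivial_of_finrank_pos h

lemma meas_f : Measurable fun y : EuclideanSpace ℝ (Fin n) => ENNReal.ofReal ‖y‖⁻¹ :=
  (measurable_norm.inv).ennreal_ofReal

lemma sharpMu_apply {S : Set (EuclideanSpace ℝ (Fin n))} (hS : MeasurableSet S) :
    sharpMu n S = ∫⁻ y in S ∩ ball (0 : EuclideanSpace ℝ (Fin n)) 1,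
      ENNReal.ofReal ‖y‖⁻¹ := by
  rw [sharpMu, withDensity_apply _ hS]
  rw [show (∫⁻ y in S, Set.indicator (Metric.ball (0 : EuclideanSpace ℝ (Fin n)) 1)
        (fun z => ENNReal.ofReal ‖z‖⁻¹) y)
      = ∫⁻ y in ball (0 : EuclideanSpace ℝ (Fin n)) 1, ENNReal.ofReal ‖y‖⁻¹
          ∂(volume.restrict S) from lintegral_indicator measurableSet_ball _]
  rw [Measure.restrict_restrict measurableSet_ball, inter_comm]

lemma lint_ball_smul (hn : 2 ≤ n) {ρ : ℝ} (hρ : 0 < ρ) :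
    ∫⁻ y in ball (0 : EuclideanSpace ℝ (Fin n)) ρ, ENNReal.ofReal ‖y‖⁻¹
      = ENNReal.ofReal (ρ ^ (n - 1)) * kap n := by
  set E := EuclideanSpace ℝ (Fin n)
  have hfin : Module.finrank ℝ E = n := finrank_euclideanSpace_fin
  set g : E → ℝ≥0∞ := (ball (0 : E) ρ).indicator (fun y => ENNReal.ofReal ‖y‖⁻¹) with hg
  have hgm : Measurable g := meas_f.indicator measurableSet_ball
  have key : ∫⁻ x, g (ρ • x) = ENNReal.ofReal ((ρ ^ n)⁻¹) * ∫⁻ x, g x := by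
    have h1 : ∫⁻ x, g (ρ • x) = ∫⁻ y, g y ∂(Measure.map (ρ • ·) (volume : Measure E)) :=
      (lintegral_map hgm (measurable_const_smul ρ)).symm
    rw [h1, Measure.map_addHaar_smul volume hρ.ne', hfin, lintegral_smul_measure]
    congr 2
    rw [abs_of_nonneg (by positivity)]
  have hpt : ∀ x : E, g (ρ • x) =
      ENNReal.ofReal ρ⁻¹ * (ball (0 : E) 1).indicator (fun y => ENNReal.ofReal ‖y‖⁻¹) x := by
    intro x
    by_cases hx : x ∈ ball (0 : E) 1
    · have hx1 : ‖x‖ < 1 := mem_ball_zero_iff.1 hx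
      have h1 : ρ • x ∈ ball (0 : E) ρ := by
        rw [mem_ball_zero_iff, norm_smul, Real.norm_eq_abs, abs_of_pos hρ]
        nlinarith [norm_nonneg x]
      rw [hg, indicator_of_mem h1, indicator_of_mem hx, norm_smul, Real.norm_eq_abs,
        abs_of_pos hρ, mul_inv, ENNReal.ofReal_mul (by positivity)]
    · have hx1 : (1 : ℝ) ≤ ‖x‖ := by
        by_contra h
        exact hx (mem_ball_zero_iff.2 (lt_of_not_ge h))
      have h1 : ρ • x ∉ ball (0 : E) ρ := by
        rw [mem_ball_zero_iff, norm_smul, Real.norm_eq_abs, abs_of_pos hρ]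
        intro h
        nlinarith
      rw [hg, indicator_of_notMem h1, indicator_of_notMem hx, mul_zero]
  have h2 : ∫⁻ x, g (ρ • x) = ENNReal.ofReal ρ⁻¹ * kap n := by
    simp_rw [hpt]
    rw [lintegral_const_mul' _ _ ENNReal.ofReal_ne_top,
      lintegral_indicator measurableSet_ball]
    rfl
  have h3 : ∫⁻ x, g x = ∫⁻ y in ball (0 : E) ρ, ENNReal.ofReal ‖y‖⁻¹ :=
    lintegral_indicator measurableSet_ball _
  have hone : ENNReal.ofReal (ρ ^ n) * ENNReal.ofReal ((ρ ^ n)⁻¹) = 1 := by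
    rw [← ENNReal.ofReal_mul (by positivity), mul_inv_cancel₀ (by positivity),
      ENNReal.ofReal_one]
  have hpow : ρ ^ n = ρ ^ (n - 1) * ρ := by
    rw [← pow_succ]; congr 1; omega
  calc ∫⁻ y in ball (0 : E) ρ, ENNReal.ofReal ‖y‖⁻¹
      = ENNReal.ofReal (ρ ^ n) * (ENNReal.ofReal ((ρ ^ n)⁻¹) * ∫⁻ x, g x) := by
        rw [← mul_assoc, hone, one_mul, h3]
    _ = ENNReal.ofReal (ρ ^ n) * (ENNReal.ofReal ρ⁻¹ * kap n) := by rw [← key, h2]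
    _ = ENNReal.ofReal (ρ ^ (n - 1)) * kap n := by
        rw [← mul_assoc, ← ENNReal.ofReal_mul (by positivity), hpow]
        congr 2
        field_simp

lemma kap_pos (hn : 2 ≤ n) : 0 < kap n := by
  haveI := nontrivialE hn
  set E := EuclideanSpace ℝ (Fin n)
  have h1 : volume (ball (0 : E) 1 \ {0}) ≤
      ∫⁻ y in ball (0 : E) 1 \ {0}, ENNReal.ofReal ‖y‖⁻¹ := by
    rw [← setLIntegral_one]
    apply setLIntegral_mono' (measurableSet_ball.diff (measurableSet_singleton _))
    intro y hy
    have hy0 : y ≠ 0 := fun h => hy.2 (by simp [h])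
    have hy1 : ‖y‖ < 1 := mem_ball_zero_iff.1 hy.1
    have : (1 : ℝ) ≤ ‖y‖⁻¹ := (one_le_inv₀ (norm_pos_iff.2 hy0)).2 hy1.le
    calc (1 : ℝ≥0∞) = ENNReal.ofReal 1 := by simp
      _ ≤ ENNReal.ofReal ‖y‖⁻¹ := ENNReal.ofReal_le_ofReal this
  have h2 : ∫⁻ y in ball (0 : E) 1 \ {0}, ENNReal.ofReal ‖y‖⁻¹ ≤ kap n :=
    lintegral_mono_set diff_subset
  have h3 : volume (ball (0 : E) 1 \ {0}) = volume (ball (0 : E) 1) := by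
    rw [measure_diff_null (measure_singleton _)]
  calc (0 : ℝ≥0∞) < volume (ball (0 : E) 1) := measure_ball_pos _ _ one_pos
    _ = volume (ball (0 : E) 1 \ {0}) := h3.symm
    _ ≤ kap n := h1.trans h2

lemma kap_ne_top (hn : 2 ≤ n) : kap n ≠ ⊤ := by
  haveI := nontrivialE hn
  set E := EuclideanSpace ℝ (Fin n)
  set V := volume (ball (0 : E) 1) with hV
  have hVtop : V ≠ ⊤ := measure_ball_lt_top.ne
  set D : ℕ → Set E := fun j => ball (0 : E) ((2⁻¹ : ℝ) ^ j) \ ball 0 ((2⁻¹ : ℝ) ^ (j + 1))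
    with hD
  have cover : ball (0 : E) 1 ⊆ {0} ∪ ⋃ j : ℕ, D j := by
    intro y hy
    by_cases h0 : y = 0
    · exact Or.inl h0
    · right
      have hy0 : 0 < ‖y‖ := norm_pos_iff.2 h0
      have hy1 : ‖y‖ < 1 := mem_ball_zero_iff.1 hy
      have hex : ∃ k : ℕ, (2⁻¹ : ℝ) ^ (k + 1) ≤ ‖y‖ := by
        obtain ⟨k, hk⟩ := exists_pow_lt_of_lt_one hy0 (by norm_num : (2⁻¹ : ℝ) < 1)
        exact ⟨k, le_trans (pow_le_pow_of_le_one (by norm_num) (by norm_num)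
          (Nat.le_succ k)) hk.le⟩
      have hj1 : (2⁻¹ : ℝ) ^ (Nat.find hex + 1) ≤ ‖y‖ := Nat.find_spec hex
      have hj2 : ‖y‖ < (2⁻¹ : ℝ) ^ (Nat.find hex) := by
        rcases Nat.eq_zero_or_pos (Nat.find hex) with h | h
        · rw [h]; simpa using hy1
        · have hmin : ¬((2⁻¹ : ℝ) ^ (Nat.find hex - 1 + 1) ≤ ‖y‖) :=
            Nat.find_min hex (show Nat.find hex - 1 < Nat.find hex by omega)
          rw [show Nat.find hex - 1 + 1 = Nat.find hex by omega] at hmin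
          exact lt_of_not_ge hmin
      refine mem_iUnion.2 ⟨Nat.find hex, ?_⟩
      exact ⟨mem_ball_zero_iff.2 hj2, fun hmem => absurd (mem_ball_zero_iff.1 hmem)
        (not_lt.2 hj1)⟩
  have hDj : ∀ j : ℕ, ∫⁻ y in D j, ENNReal.ofReal ‖y‖⁻¹ ≤
      ENNReal.ofReal 2 * V * (ENNReal.ofReal 2⁻¹) ^ j := by
    intro j
    have hbd : ∀ y ∈ D j, ENNReal.ofReal ‖y‖⁻¹ ≤ ENNReal.ofReal ((2 : ℝ) ^ (j + 1)) := by
      intro y hy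
      have h1 : (2⁻¹ : ℝ) ^ (j + 1) ≤ ‖y‖ := by
        have := hy.2
        rw [mem_ball_zero_iff] at this
        exact not_lt.1 this
      have h2 : ‖y‖⁻¹ ≤ ((2⁻¹ : ℝ) ^ (j + 1))⁻¹ :=
        inv_anti₀ (by positivity) h1
      apply ENNReal.ofReal_le_ofReal
      rw [← inv_pow, inv_inv] at h2
      exact h2
    have hmeas : volume (D j) ≤ ENNReal.ofReal (((2⁻¹ : ℝ) ^ j) ^ n) * V := by
      calc volume (D j) ≤ volume (ball (0 : E) ((2⁻¹ : ℝ) ^ j)) := measure_mono diff_subset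
        _ = ENNReal.ofReal (((2⁻¹ : ℝ) ^ j) ^ n) * V := by
            rw [hV, Measure.addHaar_ball _ _ (by positivity), finrank_euclideanSpace_fin]
    calc ∫⁻ y in D j, ENNReal.ofReal ‖y‖⁻¹
        ≤ ∫⁻ _ in D j, ENNReal.ofReal ((2 : ℝ) ^ (j + 1)) :=
          setLIntegral_mono' (measurableSet_ball.diff measurableSet_ball) hbd
      _ = ENNReal.ofReal ((2 : ℝ) ^ (j + 1)) * volume (D j) := setLIntegral_const _ _
      _ ≤ ENNReal.ofReal ((2 : ℝ) ^ (j + 1)) *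
            (ENNReal.ofReal (((2⁻¹ : ℝ) ^ j) ^ n) * V) := _root_.mul_le_mul_right hmeas _
      _ = ENNReal.ofReal ((2 : ℝ) ^ (j + 1) * ((2⁻¹ : ℝ) ^ j) ^ n) * V := by
          rw [← mul_assoc, ← ENNReal.ofReal_mul (by positivity)]
      _ ≤ ENNReal.ofReal (2 * (2⁻¹ : ℝ) ^ j) * V := by
          apply _root_.mul_le_mul_left
          apply ENNReal.ofReal_le_ofReal
          have key : (2 : ℝ) ^ j * ((2⁻¹ : ℝ) ^ j) ^ n ≤ (2⁻¹ : ℝ) ^ j := by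
            have e1 : ((2⁻¹ : ℝ) ^ j) ^ n = (2⁻¹ : ℝ) ^ (j * n) := by rw [← pow_mul]
            have e2 : (2⁻¹ : ℝ) ^ j = (2 : ℝ) ^ j * (2⁻¹ : ℝ) ^ (2 * j) := by
              rw [two_mul, pow_add, ← mul_assoc, ← mul_pow]; norm_num
            rw [e1, e2]
            apply mul_le_mul_of_nonneg_left _ (by positivity)
            apply pow_le_pow_of_le_one (by norm_num) (by norm_num)
            calc 2 * j = j * 2 := by ring
              _ ≤ j * n := Nat.mul_le_mul_left j hn
          calc (2 : ℝ) ^ (j + 1) * ((2⁻¹ : ℝ) ^ j) ^ n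
              = 2 * ((2 : ℝ) ^ j * ((2⁻¹ : ℝ) ^ j) ^ n) := by ring
            _ ≤ 2 * (2⁻¹ : ℝ) ^ j := by linarith
      _ = ENNReal.ofReal 2 * V * (ENNReal.ofReal 2⁻¹) ^ j := by
          rw [ENNReal.ofReal_mul (by norm_num), ENNReal.ofReal_pow (by norm_num)]
          ring
  have hsum : kap n ≤ (∫⁻ y in ({0} : Set E), ENNReal.ofReal ‖y‖⁻¹) +
      ∑' j : ℕ, ∫⁻ y in D j, ENNReal.ofReal ‖y‖⁻¹ := by
    calc kap n ≤ ∫⁻ y in ({0} : Set E) ∪ ⋃ j : ℕ, D j, ENNReal.ofReal ‖y‖⁻¹ :=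
        lintegral_mono_set cover
      _ ≤ (∫⁻ y in ({0} : Set E), ENNReal.ofReal ‖y‖⁻¹) +
          ∫⁻ y in ⋃ j : ℕ, D j, ENNReal.ofReal ‖y‖⁻¹ := lintegral_union_le _ _ _
      _ ≤ _ := add_le_add_right (lintegral_iUnion_le _ _) _
  have h0 : ∫⁻ y in ({0} : Set E), ENNReal.ofReal ‖y‖⁻¹ = 0 :=
    setLIntegral_measure_zero _ _ (measure_singleton _)
  have hgeom : ∑' j : ℕ, ENNReal.ofReal 2 * V * (ENNReal.ofReal 2⁻¹) ^ j =
      ENNReal.ofReal 2 * V * (1 - ENNReal.ofReal 2⁻¹)⁻¹ := by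
    rw [ENNReal.tsum_mul_left, ENNReal.tsum_geometric]
  intro htop
  have : (⊤ : ℝ≥0∞) ≤ ENNReal.ofReal 2 * V * (1 - ENNReal.ofReal 2⁻¹)⁻¹ := by
    rw [← htop, ← hgeom] at *
    calc kap n ≤ _ := hsum
      _ ≤ 0 + ∑' j : ℕ, ENNReal.ofReal 2 * V * (ENNReal.ofReal 2⁻¹) ^ j := by
          rw [h0]; exact add_le_add_right (ENNReal.tsum_le_tsum hDj) _
      _ = _ := by rw [zero_add]
  refine absurd this (not_le.2 ?_)
  apply ENNReal.mul_lt_top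
  · exact ENNReal.mul_lt_top ENNReal.ofReal_lt_top (lt_top_iff_ne_top.2 hVtop)
  · rw [ENNReal.inv_lt_top, tsub_pos_iff_lt]
    calc ENNReal.ofReal 2⁻¹ < ENNReal.ofReal 1 := by
          apply ENNReal.ofReal_lt_ofReal_iff_of_nonneg (by norm_num) |>.2; norm_num
      _ = 1 := ENNReal.ofReal_one

lemma mu_univ : sharpMu n Set.univ = kap n := by
  rw [sharpMu_apply MeasurableSet.univ, univ_inter]; rfl

lemma mu_le_kap (S : Set (EuclideanSpace ℝ (Fin n))) : sharpMu n S ≤ kap n := by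
  calc sharpMu n S ≤ sharpMu n Set.univ := measure_mono (subset_univ _)
    _ = kap n := mu_univ

lemma mu_ball_zero (hn : 2 ≤ n) {ρ : ℝ} (h0 : 0 < ρ) (h1 : ρ ≤ 1) :
    sharpMu n (ball 0 ρ) = ENNReal.ofReal (ρ ^ (n - 1)) * kap n := by
  rw [sharpMu_apply measurableSet_ball,
    inter_eq_left.2 (ball_subset_ball h1), lint_ball_smul hn h0]

lemma mu_ball_le (hn : 2 ≤ n) {ρ : ℝ} (h0 : 0 < ρ) :
    sharpMu n (ball 0 ρ) ≤ ENNReal.ofReal (ρ ^ (n - 1)) * kap n := by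
  rcases le_or_gt ρ 1 with h | h
  · exact (mu_ball_zero hn h0 h).le
  · calc sharpMu n (ball 0 ρ) ≤ kap n := mu_le_kap _
      _ = 1 * kap n := (one_mul _).symm
      _ ≤ ENNReal.ofReal (ρ ^ (n - 1)) * kap n := by
          apply _root_.mul_le_mul_left
          rw [← ENNReal.ofReal_one]
          exact ENNReal.ofReal_le_ofReal (one_le_pow₀ h.le)

lemma lint_one_div {a b : ℝ} (ha : 0 < a) (hab : a ≤ b) :
    ∫⁻ r in Ioc a b, ENNReal.ofReal (1 / r) = ENNReal.ofReal (Real.log (b / a)) := by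
  have hne : ∀ x : ℝ, x ∈ [[a, b]] → x ≠ 0 := by
    intro x hx
    have hax : a ≤ x := by
      rw [Set.uIcc_of_le hab] at hx; exact hx.1
    have : 0 < x := lt_of_lt_of_le ha hax
    exact this.ne'
  have h0m : (0 : ℝ) ∉ [[a, b]] := fun h => (hne 0 h) rfl
  have hii : IntervalIntegrable (fun r : ℝ => 1 / r) volume a b :=
    intervalIntegral.intervalIntegrable_one_div hne continuousOn_id
  have hint : IntegrableOn (fun r : ℝ => 1 / r) (Ioc a b) volume :=
    (intervalIntegrable_iff_integrableOn_Ioc_of_le hab).1 hii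
  rw [← ofReal_integral_eq_lintegral_ofReal hint]
  · congr 1
    rw [← intervalIntegral.integral_of_le hab, integral_one_div h0m]
  · filter_upwards [ae_restrict_mem measurableSet_Ioc] with r hr
    have : 0 < r := ha.trans hr.1
    positivity

end SharpnessAux

open SharpnessAux

/-- **Sharpness example** (Remark 3.1): for `dμ = |x|^{−1} χ_{B(0,1)} dx`,
`T^q_1(μ)(x) ≈ (log(1/|x|))^{1/q}` for `0 < |x| ≤ 1/2`. -/
theorem sharpness_example (n : ℕ) (hn : 2 ≤ n) (q : ℝ) (hq : 0 < q) :
    ∃ c₁ c₂ : ℝ, 0 < c₁ ∧ 0 < c₂ ∧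
      ∀ x : EuclideanSpace ℝ (Fin n), 0 < ‖x‖ → ‖x‖ ≤ 1 / 2 →
        ENNReal.ofReal (c₁ * Real.log (1 / ‖x‖) ^ (1 / q)) ≤
          Tpot n 1 q (volume.withDensity fun y =>
            Set.indicator (Metric.ball (0 : EuclideanSpace ℝ (Fin n)) 1)
              (fun z => ENNReal.ofReal ‖z‖⁻¹) y) x ∧
        Tpot n 1 q (volume.withDensity fun y =>
            Set.indicator (Metric.ball (0 : EuclideanSpace ℝ (Fin n)) 1)
              (fun z => ENNReal.ofReal ‖z‖⁻¹) y) x ≤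
          ENNReal.ofReal (c₂ * Real.log (1 / ‖x‖) ^ (1 / q)) := by
  haveI := nontrivialE hn
  have hκ0 : 0 < kap n := kap_pos hn
  have hκtop : kap n ≠ ⊤ := kap_ne_top hn
  set K : ℝ := (kap n).toReal with hK
  have hK0 : 0 < K := ENNReal.toReal_pos hκ0.ne' hκtop
  have hκK : kap n = ENNReal.ofReal K := (ENNReal.ofReal_toReal hκtop).symm
  set ω : ℝ := (volume (ball (0 : EuclideanSpace ℝ (Fin n)) 1)).toReal with hω
  have hω0 : 0 < ω :=
    ENNReal.toReal_pos (measure_ball_pos _ _ one_pos).ne' measure_ball_lt_top.ne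
  have hωeq : volume (ball (0 : EuclideanSpace ℝ (Fin n)) 1) = ENNReal.ofReal ω :=
    (ENNReal.ofReal_toReal measure_ball_lt_top.ne).symm
  set m : ℕ := n - 1 with hm
  have hm1 : 1 ≤ m := by omega
  have hcast : ((n : ℝ) - 1) = (m : ℝ) := by
    rw [hm, Nat.cast_sub (by omega), Nat.cast_one]
  set B : ℝ := 3 ^ m * K with hB
  have hB0 : 0 < B := by positivity
  have hBq0 : 0 < B ^ q := Real.rpow_pos_of_pos hB0 q
  set A₁ : ℝ := ω ^ q / q with hA₁
  set A₃ : ℝ := K ^ q * ((2 : ℝ) ^ (-q) / q) with hA₃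
  have hA₁0 : 0 ≤ A₁ := by positivity
  have hA₃0 : 0 ≤ A₃ := by positivity
  have hlog2 : 0 < Real.log 2 := Real.log_pos one_lt_two
  have hlog4 : 0 ≤ Real.log 4 := Real.log_nonneg (by norm_num)
  set Cc : ℝ := (A₁ + A₃ + B ^ q * Real.log 4) / Real.log 2 + B ^ q with hCc
  have hCc0 : 0 < Cc := by positivity
  refine ⟨K / 2 ^ m, Cc ^ (1 / q), by positivity, Real.rpow_pos_of_pos hCc0 _, ?_⟩
  intro x hx hx2
  have hμrw : (volume.withDensity fun y =>
      Set.indicator (Metric.ball (0 : EuclideanSpace ℝ (Fin n)) 1)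
        (fun z => ENNReal.ofReal ‖z‖⁻¹) y) = sharpMu n := rfl
  rw [hμrw]
  set L : ℝ := ‖x‖ with hLdef
  have hL0 : 0 < L := hx
  have hLh : L ≤ 1 / 2 := hx2
  set a : ℝ := Real.log (1 / L) with ha
  have ha2 : Real.log 2 ≤ a := by
    apply Real.log_le_log (by norm_num)
    rw [le_div_iff₀ hL0]; linarith
  have ha0 : 0 < a := lt_of_lt_of_le hlog2 ha2
  have hexp : ∀ r : ℝ, ENNReal.ofReal (r ^ ((n : ℝ) - 1)) = ENNReal.ofReal (r ^ m) := by
    intro r; rw [hcast, Real.rpow_natCast]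
  have hT : Tpot n 1 q (sharpMu n) x =
      (∫⁻ r in Ioi (0 : ℝ), (sharpMu n (ball x r) / ENNReal.ofReal (r ^ m)) ^ q
        * ENNReal.ofReal (1 / r)) ^ (1 / q) := by
    rw [Tpot]; simp_rw [hexp]
  rw [hT]
  set I : ℝ≥0∞ := ∫⁻ r in Ioi (0 : ℝ),
      (sharpMu n (ball x r) / ENNReal.ofReal (r ^ m)) ^ q * ENNReal.ofReal (1 / r) with hI
  constructor
  · -- LOWER BOUND
    have hpt : ∀ r ∈ Ioc (2 * L) 2, ENNReal.ofReal ((K / 2 ^ m) ^ q * (1 / r)) ≤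
        (sharpMu n (ball x r) / ENNReal.ofReal (r ^ m)) ^ q * ENNReal.ofReal (1 / r) := by
      intro r hr
      have hr0 : 0 < r := lt_trans (by positivity) hr.1
      have hstep : ENNReal.ofReal (K / 2 ^ m) ≤
          sharpMu n (ball x r) / ENNReal.ofReal (r ^ m) := by
        rw [ENNReal.le_div_iff_mul_le
          (Or.inl (ENNReal.ofReal_pos.2 (by positivity)).ne') (Or.inl ENNReal.ofReal_ne_top)]
        have hball : ball (0 : EuclideanSpace ℝ (Fin n)) (r / 2) ⊆ ball x r := by
          intro z hz
          rw [mem_ball_zero_iff] at hz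
          rw [mem_ball, dist_eq_norm]
          have h1 : ‖z - x‖ ≤ ‖z‖ + ‖x‖ := norm_sub_le _ _
          have h2 : ‖x‖ < r / 2 := by rw [← hLdef]; linarith [hr.1]
          linarith
        calc ENNReal.ofReal (K / 2 ^ m) * ENNReal.ofReal (r ^ m)
            = ENNReal.ofReal ((r / 2) ^ m) * ENNReal.ofReal K := by
              rw [← ENNReal.ofReal_mul (by positivity), ← ENNReal.ofReal_mul (by positivity)]
              congr 1
              rw [div_pow]; ring
          _ = sharpMu n (ball 0 (r / 2)) := by
              rw [mu_ball_zero hn (by positivity) (by linarith [hr.2]), hκK, hm]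
          _ ≤ sharpMu n (ball x r) := measure_mono hball
      calc ENNReal.ofReal ((K / 2 ^ m) ^ q * (1 / r))
          = (ENNReal.ofReal (K / 2 ^ m)) ^ q * ENNReal.ofReal (1 / r) := by
            rw [ENNReal.ofReal_mul (by positivity),
              ← ENNReal.ofReal_rpow_of_pos (by positivity)]
        _ ≤ _ := _root_.mul_le_mul_left (ENNReal.rpow_le_rpow hstep hq.le) _
    have hlow : ENNReal.ofReal ((K / 2 ^ m) ^ q * a) ≤ I := by
      calc ENNReal.ofReal ((K / 2 ^ m) ^ q * a)
          = ∫⁻ r in Ioc (2 * L) 2, ENNReal.ofReal ((K / 2 ^ m) ^ q * (1 / r)) := by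
            simp_rw [ENNReal.ofReal_mul (show (0 : ℝ) ≤ (K / 2 ^ m) ^ q by positivity)]
            rw [lintegral_const_mul' _ _ ENNReal.ofReal_ne_top,
              lint_one_div (by positivity) (by linarith)]
            congr 2
            rw [ha]
            congr 1
            field_simp
        _ ≤ ∫⁻ r in Ioc (2 * L) 2,
              (sharpMu n (ball x r) / ENNReal.ofReal (r ^ m)) ^ q
                * ENNReal.ofReal (1 / r) := setLIntegral_mono' measurableSet_Ioc hpt
        _ ≤ I := by
            rw [hI]
            exact lintegral_mono_set (fun r hr => lt_trans (by positivity) hr.1)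
    calc ENNReal.ofReal (K / 2 ^ m * a ^ (1 / q))
        = (ENNReal.ofReal ((K / 2 ^ m) ^ q * a)) ^ (1 / q) := by
          rw [ENNReal.ofReal_rpow_of_pos (by positivity)]
          congr 1
          rw [Real.mul_rpow (by positivity) ha0.le,
            ← Real.rpow_mul (by positivity : (0 : ℝ) ≤ K / 2 ^ m),
            mul_one_div_cancel hq.ne', Real.rpow_one]
      _ ≤ I ^ (1 / q) := ENNReal.rpow_le_rpow hlow (by positivity)
  · -- UPPER BOUND
    have hub1 : ∫⁻ r in Ioc 0 (L / 2),
        (sharpMu n (ball x r) / ENNReal.ofReal (r ^ m)) ^ q * ENNReal.ofReal (1 / r)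
          ≤ ENNReal.ofReal A₁ := by
      have hpt1 : ∀ r ∈ Ioc (0 : ℝ) (L / 2),
          (sharpMu n (ball x r) / ENNReal.ofReal (r ^ m)) ^ q * ENNReal.ofReal (1 / r)
            ≤ ENNReal.ofReal ((2 * ω / L) ^ q * r ^ (q - 1)) := by
        intro r hr
        have hr0 : 0 < r := hr.1
        have hrL : r ≤ L / 2 := hr.2
        have hmub : sharpMu n (ball x r) ≤
            ENNReal.ofReal (r ^ m) * ENNReal.ofReal (2 * ω / L * r) := by
          have hbd : ∀ y ∈ ball x r ∩ ball (0 : EuclideanSpace ℝ (Fin n)) 1,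
              ENNReal.ofReal ‖y‖⁻¹ ≤ ENNReal.ofReal (2 / L) := by
            intro y hy
            have h1 : ‖y - x‖ < r := by
              have := mem_ball.1 hy.1; rwa [dist_eq_norm] at this
            have h2 : L / 2 ≤ ‖y‖ := by
              have h3 : ‖x‖ ≤ ‖y - x‖ + ‖y‖ := by
                calc ‖x‖ = ‖(x - y) + y‖ := by congr 1; abel
                  _ ≤ ‖x - y‖ + ‖y‖ := norm_add_le _ _
                  _ = ‖y - x‖ + ‖y‖ := by rw [norm_sub_rev]
              rw [← hLdef] at h3
              linarith
            apply ENNReal.ofReal_le_ofReal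
            have hy0 : 0 < ‖y‖ := lt_of_lt_of_le (by positivity) h2
            calc ‖y‖⁻¹ ≤ (L / 2)⁻¹ := inv_anti₀ (by positivity) h2
              _ = 2 / L := by rw [inv_div]
          calc sharpMu n (ball x r)
              = ∫⁻ y in ball x r ∩ ball (0 : EuclideanSpace ℝ (Fin n)) 1,
                  ENNReal.ofReal ‖y‖⁻¹ := sharpMu_apply measurableSet_ball
            _ ≤ ∫⁻ _ in ball x r ∩ ball (0 : EuclideanSpace ℝ (Fin n)) 1,
                  ENNReal.ofReal (2 / L) :=
                setLIntegral_mono' (measurableSet_ball.inter measurableSet_ball) hbd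
            _ = ENNReal.ofReal (2 / L) *
                  volume (ball x r ∩ ball (0 : EuclideanSpace ℝ (Fin n)) 1) :=
                setLIntegral_const _ _
            _ ≤ ENNReal.ofReal (2 / L) * volume (ball x r) :=
                _root_.mul_le_mul_right (measure_mono inter_subset_left) _
            _ = ENNReal.ofReal (2 / L) * (ENNReal.ofReal (r ^ n) *
                  volume (ball (0 : EuclideanSpace ℝ (Fin n)) 1)) := by
                rw [Measure.addHaar_ball _ _ hr0.le, finrank_euclideanSpace_fin]
            _ = ENNReal.ofReal (r ^ m) * ENNReal.ofReal (2 * ω / L * r) := by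
                rw [hωeq, ← ENNReal.ofReal_mul (by positivity),
                  ← ENNReal.ofReal_mul (by positivity),
                  ← ENNReal.ofReal_mul (by positivity)]
                congr 1
                have hpow : r ^ n = r ^ m * r := by
                  rw [← pow_succ]; congr 1; omega
                rw [hpow]
                field_simp
        have hdiv : sharpMu n (ball x r) / ENNReal.ofReal (r ^ m) ≤
            ENNReal.ofReal (2 * ω / L * r) := ENNReal.div_le_of_le_mul' hmub
        calc (sharpMu n (ball x r) / ENNReal.ofReal (r ^ m)) ^ q * ENNReal.ofReal (1 / r)
            ≤ (ENNReal.ofReal (2 * ω / L * r)) ^ q * ENNReal.ofReal (1 / r) :=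
              _root_.mul_le_mul_left (ENNReal.rpow_le_rpow hdiv hq.le) _
          _ = ENNReal.ofReal ((2 * ω / L) ^ q * r ^ (q - 1)) := by
              rw [ENNReal.ofReal_rpow_of_pos (by positivity),
                ← ENNReal.ofReal_mul (by positivity)]
              congr 1
              rw [Real.mul_rpow (by positivity) hr0.le, Real.rpow_sub hr0, Real.rpow_one]
              field_simp
      have hint1 : ∫⁻ r in Ioc (0 : ℝ) (L / 2),
          ENNReal.ofReal ((2 * ω / L) ^ q * r ^ (q - 1)) = ENNReal.ofReal A₁ := by
        have hII : IntervalIntegrable (fun r : ℝ => (2 * ω / L) ^ q * r ^ (q - 1))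
            volume 0 (L / 2) :=
          (intervalIntegral.intervalIntegrable_rpow' (by linarith)).const_mul _
        have hInt : IntegrableOn (fun r : ℝ => (2 * ω / L) ^ q * r ^ (q - 1))
            (Ioc 0 (L / 2)) volume :=
          (intervalIntegrable_iff_integrableOn_Ioc_of_le (by positivity)).1 hII
        rw [← ofReal_integral_eq_lintegral_ofReal hInt]
        · congr 1
          rw [← intervalIntegral.integral_of_le (by positivity),
            intervalIntegral.integral_const_mul, integral_rpow (Or.inl (by linarith)),
            show q - 1 + 1 = q by ring, Real.zero_rpow hq.ne', sub_zero, hA₁]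
          have h2 : (2 * ω / L) ^ q * (L / 2) ^ q = ω ^ q := by
            rw [← Real.mul_rpow (by positivity) (by positivity)]
            congr 1
            field_simp
          rw [← mul_div_assoc, h2]
        · filter_upwards [ae_restrict_mem measurableSet_Ioc] with r hr
          have : 0 < r := hr.1
          positivity
      rw [← hint1]
      exact setLIntegral_mono' measurableSet_Ioc hpt1
    have hub2 : ∫⁻ r in Ioc (L / 2) 2,
        (sharpMu n (ball x r) / ENNReal.ofReal (r ^ m)) ^ q * ENNReal.ofReal (1 / r)
          ≤ ENNReal.ofReal (B ^ q * Real.log (4 / L)) := by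
      have hpt2 : ∀ r ∈ Ioc (L / 2) 2,
          (sharpMu n (ball x r) / ENNReal.ofReal (r ^ m)) ^ q * ENNReal.ofReal (1 / r)
            ≤ ENNReal.ofReal (B ^ q * (1 / r)) := by
        intro r hr
        have hr0 : 0 < r := lt_trans (by positivity) hr.1
        have hball : ball x r ⊆ ball (0 : EuclideanSpace ℝ (Fin n)) (r + L) := by
          intro y hy
          rw [mem_ball_zero_iff]
          have h1 : ‖y - x‖ < r := by
            have := mem_ball.1 hy; rwa [dist_eq_norm] at this
          calc ‖y‖ = ‖(y - x) + x‖ := by congr 1; abel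
            _ ≤ ‖y - x‖ + ‖x‖ := norm_add_le _ _
            _ < r + L := by rw [← hLdef]; linarith
        have hmub : sharpMu n (ball x r) ≤ ENNReal.ofReal (r ^ m) * ENNReal.ofReal B := by
          calc sharpMu n (ball x r) ≤ sharpMu n (ball 0 (r + L)) := measure_mono hball
            _ ≤ ENNReal.ofReal ((r + L) ^ (n - 1)) * kap n :=
                mu_ball_le hn (by positivity)
            _ ≤ ENNReal.ofReal (r ^ m) * ENNReal.ofReal B := by
                rw [hκK, ← ENNReal.ofReal_mul (by positivity),
                  ← ENNReal.ofReal_mul (by positivity)]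
                apply ENNReal.ofReal_le_ofReal
                have h2 : (r + L) ^ m ≤ (3 * r) ^ m :=
                  pow_le_pow_left₀ (by positivity) (by linarith [hr.1]) m
                calc (r + L) ^ (n - 1) * K = (r + L) ^ m * K := by rw [hm]
                  _ ≤ (3 * r) ^ m * K := by
                      apply mul_le_mul_of_nonneg_right h2 hK0.le
                  _ = r ^ m * B := by rw [hB, mul_pow]; ring
        have hdiv : sharpMu n (ball x r) / ENNReal.ofReal (r ^ m) ≤ ENNReal.ofReal B :=
          ENNReal.div_le_of_le_mul' hmub
        calc (sharpMu n (ball x r) / ENNReal.ofReal (r ^ m)) ^ q * ENNReal.ofReal (1 / r)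
            ≤ (ENNReal.ofReal B) ^ q * ENNReal.ofReal (1 / r) :=
              _root_.mul_le_mul_left (ENNReal.rpow_le_rpow hdiv hq.le) _
          _ = ENNReal.ofReal (B ^ q * (1 / r)) := by
              rw [ENNReal.ofReal_rpow_of_pos hB0, ← ENNReal.ofReal_mul (by positivity)]
      have hint2 : ∫⁻ r in Ioc (L / 2) 2, ENNReal.ofReal (B ^ q * (1 / r))
          = ENNReal.ofReal (B ^ q * Real.log (4 / L)) := by
        simp_rw [ENNReal.ofReal_mul (show (0 : ℝ) ≤ B ^ q by positivity)]
        rw [lintegral_const_mul' _ _ ENNReal.ofReal_ne_top,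
          lint_one_div (by positivity) (by linarith)]
        congr 2
        rw [show (2 : ℝ) / (L / 2) = 4 / L by field_simp; ring]
      rw [← hint2]
      exact setLIntegral_mono' measurableSet_Ioc hpt2
    have hub3 : ∫⁻ r in Ioi (2 : ℝ),
        (sharpMu n (ball x r) / ENNReal.ofReal (r ^ m)) ^ q * ENNReal.ofReal (1 / r)
          ≤ ENNReal.ofReal A₃ := by
      have hpt3 : ∀ r ∈ Ioi (2 : ℝ),
          (sharpMu n (ball x r) / ENNReal.ofReal (r ^ m)) ^ q * ENNReal.ofReal (1 / r)
            ≤ ENNReal.ofReal (K ^ q * r ^ (-q - 1)) := by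
        intro r hr
        have hr0 : (0 : ℝ) < r := lt_trans (by norm_num) hr
        have hr1 : (1 : ℝ) ≤ r := by linarith [mem_Ioi.1 hr]
        have hdiv : sharpMu n (ball x r) / ENNReal.ofReal (r ^ m) ≤
            ENNReal.ofReal (K / r) := by
          calc sharpMu n (ball x r) / ENNReal.ofReal (r ^ m)
              ≤ ENNReal.ofReal K / ENNReal.ofReal (r ^ m) := by
                apply ENNReal.div_le_div_right
                rw [← hκK]; exact mu_le_kap _
            _ ≤ ENNReal.ofReal K / ENNReal.ofReal r :=
                ENNReal.div_le_div_left
                  (ENNReal.ofReal_le_ofReal (le_self_pow₀ hr1 (by omega))) _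
            _ = ENNReal.ofReal (K / r) := (ENNReal.ofReal_div_of_pos hr0).symm
        calc (sharpMu n (ball x r) / ENNReal.ofReal (r ^ m)) ^ q * ENNReal.ofReal (1 / r)
            ≤ (ENNReal.ofReal (K / r)) ^ q * ENNReal.ofReal (1 / r) :=
              _root_.mul_le_mul_left (ENNReal.rpow_le_rpow hdiv hq.le) _
          _ = ENNReal.ofReal (K ^ q * r ^ (-q - 1)) := by
              rw [ENNReal.ofReal_rpow_of_pos (by positivity),
                ← ENNReal.ofReal_mul (by positivity)]
              congr 1
              rw [Real.div_rpow hK0.le hr0.le, show -q - 1 = -q + -1 by ring,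
                Real.rpow_add hr0, Real.rpow_neg_one, Real.rpow_neg hr0.le,
                div_eq_mul_inv, one_div]
              ring
      have hint3 : ∫⁻ r in Ioi (2 : ℝ), ENNReal.ofReal (K ^ q * r ^ (-q - 1))
          = ENNReal.ofReal A₃ := by
        have hInt : IntegrableOn (fun r : ℝ => K ^ q * r ^ (-q - 1)) (Ioi 2) volume :=
          (integrableOn_Ioi_rpow_of_lt (by linarith) (by norm_num : (0 : ℝ) < 2)).const_mul _
        rw [← ofReal_integral_eq_lintegral_ofReal hInt]
        · congr 1
          rw [integral_const_mul,
            integral_Ioi_rpow_of_lt (by linarith) (by norm_num : (0 : ℝ) < 2), hA₃,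
            show -q - 1 + 1 = -q by ring, neg_div_neg_eq]
        · filter_upwards [ae_restrict_mem measurableSet_Ioi] with r hr
          have : (0 : ℝ) < r := lt_trans (by norm_num) hr
          positivity
      rw [← hint3]
      exact setLIntegral_mono' measurableSet_Ioi hpt3
    have hsplit : I ≤ ENNReal.ofReal A₁ + ENNReal.ofReal (B ^ q * Real.log (4 / L))
        + ENNReal.ofReal A₃ := by
      have hset : Ioi (0 : ℝ) = (Ioc 0 (L / 2) ∪ Ioc (L / 2) 2) ∪ Ioi 2 := by
        rw [Ioc_union_Ioc_eq_Ioc (by positivity) (by linarith),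
          Ioc_union_Ioi_eq_Ioi (by norm_num : (0 : ℝ) ≤ 2)]
      rw [hI, hset]
      calc ∫⁻ r in (Ioc 0 (L / 2) ∪ Ioc (L / 2) 2) ∪ Ioi 2,
            (sharpMu n (ball x r) / ENNReal.ofReal (r ^ m)) ^ q * ENNReal.ofReal (1 / r)
          ≤ (∫⁻ r in Ioc 0 (L / 2) ∪ Ioc (L / 2) 2,
              (sharpMu n (ball x r) / ENNReal.ofReal (r ^ m)) ^ q * ENNReal.ofReal (1 / r))
            + ∫⁻ r in Ioi 2,
              (sharpMu n (ball x r) / ENNReal.ofReal (r ^ m)) ^ q * ENNReal.ofReal (1 / r) :=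
            lintegral_union_le _ _ _
        _ ≤ ((∫⁻ r in Ioc 0 (L / 2),
              (sharpMu n (ball x r) / ENNReal.ofReal (r ^ m)) ^ q * ENNReal.ofReal (1 / r))
            + ∫⁻ r in Ioc (L / 2) 2,
              (sharpMu n (ball x r) / ENNReal.ofReal (r ^ m)) ^ q * ENNReal.ofReal (1 / r))
            + ∫⁻ r in Ioi 2,
              (sharpMu n (ball x r) / ENNReal.ofReal (r ^ m)) ^ q * ENNReal.ofReal (1 / r) :=
            add_le_add_left (lintegral_union_le _ _ _) _
        _ ≤ _ := add_le_add (add_le_add hub1 hub2) hub3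
    have hlog4L0 : 0 ≤ Real.log (4 / L) := by
      apply Real.log_nonneg
      rw [le_div_iff₀ hL0]; linarith
    have hreal : A₁ + B ^ q * Real.log (4 / L) + A₃ ≤ Cc * a := by
      have hlog4L : Real.log (4 / L) = Real.log 4 + a := by
        rw [ha, Real.log_div (by norm_num) hL0.ne', Real.log_div (by norm_num) hL0.ne',
          Real.log_one]
        ring
      have hD : 0 ≤ A₁ + A₃ + B ^ q * Real.log 4 := by positivity
      have key : A₁ + A₃ + B ^ q * Real.log 4 ≤
          ((A₁ + A₃ + B ^ q * Real.log 4) / Real.log 2) * a := by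
        rw [div_mul_eq_mul_div, le_div_iff₀ hlog2]
        exact mul_le_mul_of_nonneg_left ha2 hD
      calc A₁ + B ^ q * Real.log (4 / L) + A₃
          = (A₁ + A₃ + B ^ q * Real.log 4) + B ^ q * a := by rw [hlog4L]; ring
        _ ≤ ((A₁ + A₃ + B ^ q * Real.log 4) / Real.log 2) * a + B ^ q * a := by
            linarith [key]
        _ = Cc * a := by rw [hCc]; ring
    calc I ^ (1 / q)
        ≤ (ENNReal.ofReal (Cc * a)) ^ (1 / q) := by
          apply ENNReal.rpow_le_rpow _ (by positivity)
          calc I ≤ _ := hsplit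
            _ = ENNReal.ofReal (A₁ + B ^ q * Real.log (4 / L) + A₃) := by
                rw [← ENNReal.ofReal_add hA₁0 (by positivity),
                  ← ENNReal.ofReal_add (by positivity) hA₃0]
            _ ≤ ENNReal.ofReal (Cc * a) := ENNReal.ofReal_le_ofReal hreal
      _ = ENNReal.ofReal (Cc ^ (1 / q) * a ^ (1 / q)) := by
          rw [ENNReal.ofReal_rpow_of_pos (by positivity),
            Real.mul_rpow hCc0.le ha0.le]


end
end

section
/- Let q > 0, λ₀ > 0 and c > 0. Then there exist constants c′ > 0 and C > 0, depending only on q, c and λ₀, such that the following holds: if ν is a finite Borel measure on a measurable space X, and h : X → [0,∞] is measurable with ν({x : h(x) > 2λ}) ≤ e^{−cλ^q} ν({x : h(x) > λ}) for all λ > λ₀, then ∫_X exp( c′ h(x)^q ) dν(x) ≤ C ν(X). -/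
open MeasureTheory Metric Set ENNReal

noncomputable section

open Filter

/-- **Abstract exponential integrability from level-set decay**: if
`ν({h > 2λ}) ≤ e^{−cλ^q} ν({h > λ})` for all `λ > λ₀`, then
`∫ exp(c′ h^q) dν ≤ C ν(X)`. -/
theorem exp_integrability_abstract (q lam₀ c : ℝ)
    (hq : 0 < q) (hlam₀ : 0 < lam₀) (hc : 0 < c) :
    ∃ c' C : ℝ, 0 < c' ∧ 0 < C ∧
      ∀ (X : Type) (_ : MeasurableSpace X) (ν : Measure X), IsFiniteMeasure ν →
        ∀ h : X → ℝ≥0∞, Measurable h →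
          (∀ lam : ℝ, lam₀ < lam →
            ν {x | ENNReal.ofReal (2 * lam) < h x} ≤
              ENNReal.ofReal (Real.exp (-c * lam ^ q)) * ν {x | ENNReal.ofReal lam < h x}) →
          ∫⁻ x, expE (ENNReal.ofReal c' * (h x) ^ q) ∂ν ≤ ENNReal.ofReal C * ν Set.univ := by
  classical
  set L : ℝ := 2 * lam₀ with hLdef
  have hL : 0 < L := by positivity
  have hLgt : lam₀ < L := by simp only [hLdef]; linarith
  have h4q : (0:ℝ) < (4:ℝ) ^ q := Real.rpow_pos_of_pos (by norm_num) q
  have hLq : (0:ℝ) < L ^ q := Real.rpow_pos_of_pos hL q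
  set c' : ℝ := c / (2 * (4:ℝ) ^ q) with hc'def
  have hc' : 0 < c' := by positivity
  set s : ℝ := (2:ℝ) ^ q with hsdef
  have hs1 : 1 < s := by
    have := Real.rpow_lt_rpow (by norm_num : (0:ℝ) ≤ 1) (by norm_num : (1:ℝ) < 2) hq
    simpa [hsdef] using this
  set r : ℝ := Real.exp (-(c/2) * L ^ q * (s - 1)) with hrdef
  have hr0 : 0 < r := Real.exp_pos _
  have hr1 : r < 1 := by
    rw [hrdef]
    have hpos : 0 < c/2 * L ^ q * (s - 1) :=
      mul_pos (mul_pos (by linarith) hLq) (by linarith)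
    have : -(c/2) * L ^ q * (s - 1) < 0 := by nlinarith [hpos]
    calc Real.exp (-(c/2) * L ^ q * (s - 1)) < Real.exp 0 := Real.exp_lt_exp.mpr this
      _ = 1 := Real.exp_zero
  have h1r : 0 < 1 - r := by linarith
  set B : ℝ := Real.exp (-(c/2) * L ^ q) with hBdef
  have hB : 0 < B := Real.exp_pos _
  refine ⟨c', Real.exp (c' * L ^ q) + (Real.exp (c' * (2 * L) ^ q) + B * (1 - r)⁻¹),
    hc', by positivity, ?_⟩
  intro X mX ν hν h hmeas hdecay
  set P : ℕ → ℝ := fun k => 2 ^ k * L with hPdef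
  have hP0 : ∀ k, 0 < P k := fun k => by positivity
  have hPgt : ∀ k, lam₀ < P k := by
    intro k
    have h1 : (1:ℝ) ≤ 2 ^ k := one_le_pow₀ (by norm_num)
    have : L ≤ P k := by
      simpa [hPdef] using mul_le_mul_of_nonneg_right h1 hL.le
    linarith
  set A : ℕ → Set X := fun k => {x | ENNReal.ofReal (P k) < h x} with hAdef
  have hAmeas : ∀ k, MeasurableSet (A k) := fun k => hmeas measurableSet_Ioi
  -- decay for each level
  have hνA : ∀ k : ℕ, ν (A (k+1)) ≤
      ENNReal.ofReal (Real.exp (-c * (P k) ^ q)) * ν Set.univ := by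
    intro k
    have hstep := hdecay (P k) (hPgt k)
    have hPk : (2:ℝ) * P k = P (k+1) := by simp only [hPdef]; ring
    rw [hPk] at hstep
    exact hstep.trans (mul_le_mul_right (measure_mono (Set.subset_univ _)) _)
  -- pointwise bound
  have hpt : ∀ (t : ℝ) (x : X), 0 ≤ t → h x ≤ ENNReal.ofReal t →
      expE (ENNReal.ofReal c' * (h x) ^ q) ≤ ENNReal.ofReal (Real.exp (c' * t ^ q)) := by
    intro t x ht hx
    have h1 : (h x) ^ q ≤ ENNReal.ofReal (t ^ q) := by
      rw [← ENNReal.ofReal_rpow_of_nonneg ht hq.le]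
      exact ENNReal.rpow_le_rpow hx hq.le
    have h2 : ENNReal.ofReal c' * (h x) ^ q ≤ ENNReal.ofReal (c' * t ^ q) := by
      rw [ENNReal.ofReal_mul hc'.le]
      exact mul_le_mul_right h1 _
    have hne : ENNReal.ofReal c' * (h x) ^ q ≠ ⊤ :=
      ne_top_of_le_ne_top ENNReal.ofReal_ne_top h2
    rw [expE, if_neg hne]
    refine ENNReal.ofReal_le_ofReal (Real.exp_le_exp.mpr ?_)
    exact ENNReal.toReal_le_of_le_ofReal (by positivity) h2
  -- set bound
  have hset : ∀ (S : Set X) (t : ℝ), 0 ≤ t → (∀ x ∈ S, h x ≤ ENNReal.ofReal t) →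
      ∫⁻ x in S, expE (ENNReal.ofReal c' * (h x) ^ q) ∂ν ≤
        ENNReal.ofReal (Real.exp (c' * t ^ q)) * ν S := by
    intro S t ht hS
    calc ∫⁻ x in S, expE (ENNReal.ofReal c' * (h x) ^ q) ∂ν
        ≤ ∫⁻ _ in S, ENNReal.ofReal (Real.exp (c' * t ^ q)) ∂ν :=
          setLIntegral_mono measurable_const (fun x hx => hpt t x ht (hS x hx))
      _ = ENNReal.ofReal (Real.exp (c' * t ^ q)) * ν S := setLIntegral_const _ _
  -- intersection is null
  have hinter : ν (⋂ k, A k) = 0 := by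
    have hle : ∀ k : ℕ, ν (⋂ j, A j) ≤
        ENNReal.ofReal (Real.exp (-c * (P k) ^ q)) * ν Set.univ :=
      fun k => (measure_mono (Set.iInter_subset _ (k+1))).trans (hνA k)
    have hP : Tendsto (fun k : ℕ => P k) atTop atTop := by
      have h2 : Tendsto (fun k : ℕ => (2:ℝ) ^ k) atTop atTop :=
        tendsto_pow_atTop_atTop_of_one_lt (by norm_num)
      simpa [hPdef] using h2.atTop_mul_const hL
    have hPq : Tendsto (fun k : ℕ => (P k) ^ q) atTop atTop :=
      (tendsto_rpow_atTop hq).comp hP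
    have h1 : Tendsto (fun k : ℕ => -c * (P k) ^ q) atTop atBot := by
      have := hPq.const_mul_atTop hc
      have hneg : Tendsto (fun k : ℕ => -(c * (P k) ^ q)) atTop atBot :=
        tendsto_neg_atBot_iff.mpr this
      simpa [neg_mul] using hneg
    have h2 : Tendsto (fun k : ℕ => ENNReal.ofReal (Real.exp (-c * (P k) ^ q)))
        atTop (nhds 0) := by
      rw [← ENNReal.ofReal_zero]
      exact ENNReal.tendsto_ofReal (Real.tendsto_exp_atBot.comp h1)
    have htend : Tendsto (fun k : ℕ =>
        ENNReal.ofReal (Real.exp (-c * (P k) ^ q)) * ν Set.univ) atTop (nhds 0) := by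
      simpa using ENNReal.Tendsto.mul_const h2 (Or.inr (measure_ne_top ν _))
    exact le_antisymm (ge_of_tendsto' htend hle) (zero_le)
  -- cover
  have hcover : A 0 ⊆ (⋃ k : ℕ, (A k \ A (k+1))) ∪ ⋂ k, A k := by
    intro x hx
    by_cases hall : ∀ k, x ∈ A k
    · exact Or.inr (Set.mem_iInter.mpr hall)
    · push_neg at hall
      left
      have hex : ∃ k, x ∉ A k := hall
      have hk : x ∉ A (Nat.find hex) := Nat.find_spec hex
      have hk0 : Nat.find hex ≠ 0 := fun h0 => hk (h0 ▸ hx)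
      obtain ⟨m, hm⟩ := Nat.exists_eq_succ_of_ne_zero hk0
      have hxm : x ∈ A m := not_not.mp (Nat.find_min hex (by omega))
      have hxm1 : x ∉ A (m+1) := by rwa [hm] at hk
      exact Set.mem_iUnion.mpr ⟨m, hxm, hxm1⟩
  set f : X → ℝ≥0∞ := fun x => expE (ENNReal.ofReal c' * (h x) ^ q) with hfdef
  -- bound on complement
  have hcompl : ∫⁻ x in (A 0)ᶜ, f x ∂ν ≤
      ENNReal.ofReal (Real.exp (c' * L ^ q)) * ν Set.univ := by
    have hPL : P 0 = L := by simp [hPdef]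
    have := hset ((A 0)ᶜ) (P 0) (hP0 0).le (fun x hx => not_lt.mp hx)
    rw [hPL] at this
    exact this.trans (mul_le_mul_right (measure_mono (Set.subset_univ _)) _)
  -- shell bounds
  have hshell : ∀ k : ℕ, ∫⁻ x in A k \ A (k+1), f x ∂ν ≤
      ENNReal.ofReal (Real.exp (c' * (P (k+1)) ^ q)) * ν (A k) := by
    intro k
    have := hset (A k \ A (k+1)) (P (k+1)) (hP0 (k+1)).le
      (fun x hx => not_lt.mp hx.2)
    exact this.trans (mul_le_mul_right (measure_mono Set.diff_subset) _)
  -- key exponent identity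
  have hkey : ∀ m : ℕ, c' * (P (m+2)) ^ q = c/2 * (P m) ^ q := by
    intro m
    have h1 : P (m+2) = 4 * P m := by simp only [hPdef]; ring
    rw [h1, Real.mul_rpow (by norm_num) (hP0 m).le, hc'def]
    field_simp
  -- geometric bound for the tail terms
  have hG : ∀ m : ℕ,
      Real.exp (c' * (P (m+2)) ^ q) * Real.exp (-c * (P m) ^ q) ≤ B * r ^ m := by
    intro m
    rw [← Real.exp_add, hkey m]
    have hPmq : (P m) ^ q = s ^ m * L ^ q := by
      simp only [hPdef, hsdef]
      rw [Real.mul_rpow (by positivity) hL.le, ← Real.rpow_natCast (2:ℝ) m,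
        ← Real.rpow_natCast ((2:ℝ) ^ q) m, ← Real.rpow_mul (by norm_num),
        ← Real.rpow_mul (by norm_num)]
      ring_nf
    have hber : 1 + (m:ℝ) * (s - 1) ≤ s ^ m := by
      have := one_add_mul_le_pow (a := s - 1) (by linarith) m
      simpa using this
    have hexp : c/2 * (P m) ^ q + -c * (P m) ^ q = -(c/2) * (s ^ m * L ^ q) := by
      rw [hPmq]; ring
    rw [hexp]
    have hle : -(c/2) * (s ^ m * L ^ q) ≤ -(c/2) * L ^ q + (m:ℝ) * (-(c/2) * L ^ q * (s - 1)) := by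
      nlinarith [mul_le_mul_of_nonneg_left hber (by positivity : (0:ℝ) ≤ c/2 * L ^ q)]
    calc Real.exp (-(c/2) * (s ^ m * L ^ q))
        ≤ Real.exp (-(c/2) * L ^ q + (m:ℝ) * (-(c/2) * L ^ q * (s - 1))) :=
          Real.exp_le_exp.mpr hle
      _ = B * r ^ m := by
          rw [Real.exp_add, hBdef, hrdef, ← Real.exp_nat_mul]
  -- tail sum
  have htail : ∑' m : ℕ, (ENNReal.ofReal (Real.exp (c' * (P (m+2)) ^ q)) *
      (ENNReal.ofReal (Real.exp (-c * (P m) ^ q)) * ν Set.univ)) ≤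
      ENNReal.ofReal (B * (1 - r)⁻¹) * ν Set.univ := by
    have hterm : ∀ m : ℕ, ENNReal.ofReal (Real.exp (c' * (P (m+2)) ^ q)) *
        (ENNReal.ofReal (Real.exp (-c * (P m) ^ q)) * ν Set.univ) ≤
        (ENNReal.ofReal B * ENNReal.ofReal r ^ m) * ν Set.univ := by
      intro m
      rw [← mul_assoc, ← ENNReal.ofReal_mul (Real.exp_pos _).le]
      refine mul_le_mul_left ?_ _
      rw [← ENNReal.ofReal_pow hr0.le, ← ENNReal.ofReal_mul hB.le]
      exact ENNReal.ofReal_le_ofReal (hG m)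
    calc ∑' m : ℕ, (ENNReal.ofReal (Real.exp (c' * (P (m+2)) ^ q)) *
          (ENNReal.ofReal (Real.exp (-c * (P m) ^ q)) * ν Set.univ))
        ≤ ∑' m : ℕ, (ENNReal.ofReal B * ENNReal.ofReal r ^ m) * ν Set.univ :=
          ENNReal.tsum_le_tsum hterm
      _ = (ENNReal.ofReal B * ∑' m : ℕ, ENNReal.ofReal r ^ m) * ν Set.univ := by
          rw [ENNReal.tsum_mul_right, ENNReal.tsum_mul_left]
      _ = ENNReal.ofReal (B * (1 - r)⁻¹) * ν Set.univ := by
          rw [ENNReal.tsum_geometric, ENNReal.ofReal_mul hB.le,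
            ENNReal.ofReal_inv_of_pos h1r, ENNReal.ofReal_sub 1 hr0.le, ENNReal.ofReal_one]
  -- assemble
  have hP1 : P 1 = 2 * L := by norm_num [hPdef]
  calc ∫⁻ x, f x ∂ν = ∫⁻ x in A 0, f x ∂ν + ∫⁻ x in (A 0)ᶜ, f x ∂ν :=
      (lintegral_add_compl f (hAmeas 0)).symm
    _ ≤ ((∑' k : ℕ, ∫⁻ x in A k \ A (k+1), f x ∂ν) + ∫⁻ x in ⋂ k, A k, f x ∂ν)
        + ENNReal.ofReal (Real.exp (c' * L ^ q)) * ν Set.univ := by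
      refine add_le_add ?_ hcompl
      calc ∫⁻ x in A 0, f x ∂ν
          ≤ ∫⁻ x in (⋃ k : ℕ, (A k \ A (k+1))) ∪ ⋂ k, A k, f x ∂ν :=
            lintegral_mono_set hcover
        _ ≤ ∫⁻ x in ⋃ k : ℕ, (A k \ A (k+1)), f x ∂ν + ∫⁻ x in ⋂ k, A k, f x ∂ν :=
            lintegral_union_le _ _ _
        _ ≤ _ := add_le_add_left (lintegral_iUnion_le _ _) _
    _ = (∑' k : ℕ, ∫⁻ x in A k \ A (k+1), f x ∂ν)
        + ENNReal.ofReal (Real.exp (c' * L ^ q)) * ν Set.univ := by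
      rw [setLIntegral_measure_zero _ _ hinter, add_zero]
    _ ≤ (∑' k : ℕ, ENNReal.ofReal (Real.exp (c' * (P (k+1)) ^ q)) * ν (A k))
        + ENNReal.ofReal (Real.exp (c' * L ^ q)) * ν Set.univ :=
      add_le_add_left (ENNReal.tsum_le_tsum hshell) _
    _ = (ENNReal.ofReal (Real.exp (c' * (P 1) ^ q)) * ν (A 0)
        + ∑' m : ℕ, ENNReal.ofReal (Real.exp (c' * (P (m+2)) ^ q)) * ν (A (m+1)))
        + ENNReal.ofReal (Real.exp (c' * L ^ q)) * ν Set.univ := by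
      rw [tsum_eq_zero_add' ENNReal.summable]
    _ ≤ (ENNReal.ofReal (Real.exp (c' * (2 * L) ^ q)) * ν Set.univ
        + ENNReal.ofReal (B * (1 - r)⁻¹) * ν Set.univ)
        + ENNReal.ofReal (Real.exp (c' * L ^ q)) * ν Set.univ := by
      refine add_le_add_left (add_le_add ?_ ?_) _
      · rw [hP1]
        exact mul_le_mul_right (measure_mono (Set.subset_univ _)) _
      · refine le_trans (ENNReal.tsum_le_tsum fun m => ?_) htail
        exact mul_le_mul_right (hνA m) _
    _ = ENNReal.ofReal (Real.exp (c' * L ^ q)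
          + (Real.exp (c' * (2 * L) ^ q) + B * (1 - r)⁻¹)) * ν Set.univ := by
      rw [ENNReal.ofReal_add (by positivity) (by positivity),
        ENNReal.ofReal_add (by positivity) (by positivity), add_mul, add_mul]
      ring


end
end
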